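/- Let W be Gaussian with mean −σ/2 and nonsingular covariance C, f its density, f_j(w) = e^{w_j}f(w), and g_{i,ε} as above. Then for every probability vector p with p_i > 0 for all i and every ε ∈ (0,1), C(p,ε) := inf_{w∈ℝ^N} (Σ_i p_i g_{i,ε}(w)) / (max_j f_j(w)) = inf_{w∈ℝ^N} min_{j=1..N} (Σ_i p_i g_{i,ε}(w)) / f_j(w), and C(p,ε) > 0. -/

import Mathlib

open Matrix Real

/-- Cauchy-Schwarz style bound: for pos def `C`, `(v j)^2 ≤ C j j * (v ⬝ᵥ C⁻¹ *ᵥ v)`. -/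
lemma aux_cs {N : ℕ} (C : Matrix (Fin N) (Fin N) ℝ) (hC : C.PosDef)
    (v : Fin N → ℝ) (j : Fin N) : (v j) ^ 2 ≤ C j j * (v ⬝ᵥ C⁻¹ *ᵥ v) := by
  set M := C⁻¹ with hM
  have hMpd : M.PosDef := hC.inv
  have hMsymm : Mᵀ = M := hMpd.1
  have hsymm : ∀ a b : Fin N → ℝ, a ⬝ᵥ M *ᵥ b = b ⬝ᵥ M *ᵥ a := by
    intro a b
    rw [Matrix.dotProduct_mulVec, ← Matrix.mulVec_transpose, hMsymm, dotProduct_comm]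
  set u : Fin N → ℝ := fun k => C k j with hu
  have hMu : M *ᵥ u = Pi.single j 1 := by
    have : u = C *ᵥ Pi.single j 1 := by
      funext k
      simp [hu, Matrix.mulVec_single]
    rw [this, Matrix.mulVec_mulVec, Matrix.nonsing_inv_mul C (isUnit_iff_ne_zero.2 hC.det_pos.ne'),
      Matrix.one_mulVec]
  have huv : u ⬝ᵥ M *ᵥ v = v j := by
    rw [hsymm, hMu, dotProduct_single, mul_one]
  have huu : u ⬝ᵥ M *ᵥ u = C j j := by
    rw [hsymm, hMu, dotProduct_single, mul_one]
  have hq : ∀ t : ℝ, 0 ≤ C j j * (t * t) + (2 * v j) * t + v ⬝ᵥ M *ᵥ v := by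
    intro t
    have h0 := hMpd.posSemidef.dotProduct_mulVec_nonneg (v + t • u)
    have hexp : (v + t • u) ⬝ᵥ M *ᵥ (v + t • u)
        = C j j * (t * t) + (2 * v j) * t + v ⬝ᵥ M *ᵥ v := by
      have e1 := hsymm u v
      simp only [Matrix.mulVec_add, Matrix.mulVec_smul, add_dotProduct, smul_dotProduct,
        dotProduct_add, dotProduct_smul, smul_eq_mul] at *
      rw [← e1, huv, huu]; ring
    have : star (v + t • u) = v + t • u := rfl
    rw [this, hexp] at h0
    exact h0
  have hd := discrim_le_zero hq
  rw [discrim] at hd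
  nlinarith [hd]

/-- the rejection constant `C(p,ε)` can be written either as an infimum
of the ratio to `max_j f_j` or as a double infimum over `w` and `j`, and it is
strictly positive. -/
theorem stmt_17 {N : ℕ} [NeZero N] (C : Matrix (Fin N) (Fin N) ℝ) (hC : C.PosDef)
    (ε : ℝ) (hε : ε ∈ Set.Ioo (0 : ℝ) 1)
    (p : Fin N → ℝ) (hp : ∀ i, 0 < p i) (hpsum : ∑ i, p i = 1) :
    let σ : Fin N → ℝ := fun k => C k k
    let f : (Fin N → ℝ) → ℝ := fun w =>
      (2 * Real.pi) ^ (-(N : ℝ) / 2) * C.det ^ (-(1 : ℝ) / 2) *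
        Real.exp (-(1 / 2) * ((w + (1 / 2 : ℝ) • σ) ⬝ᵥ (C⁻¹ *ᵥ (w + (1 / 2 : ℝ) • σ))))
    let fj : Fin N → (Fin N → ℝ) → ℝ := fun j w => Real.exp (w j) * f w
    let g : Fin N → (Fin N → ℝ) → ℝ := fun i w =>
      (1 - ε) ^ ((N : ℝ) / 2) * (2 * Real.pi) ^ (-(N : ℝ) / 2) * C.det ^ (-(1 : ℝ) / 2) *
        Real.exp ((1 - ε) * w i) *
        Real.exp (-((1 - ε) / 2) * ((w + (1 / 2 : ℝ) • σ) ⬝ᵥ (C⁻¹ *ᵥ (w + (1 / 2 : ℝ) • σ))))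
    (⨅ w : Fin N → ℝ, (∑ i, p i * g i w) / (⨆ j, fj j w)) =
      (⨅ w : Fin N → ℝ, ⨅ j, (∑ i, p i * g i w) / fj j w) ∧
    0 < ⨅ w : Fin N → ℝ, (∑ i, p i * g i w) / (⨆ j, fj j w) := by
  intro σ f fj g
  obtain ⟨hε0, hε1⟩ := hε
  have h1ε : (0:ℝ) < 1 - ε := by linarith
  have hApos : (0:ℝ) < (1 - ε) ^ ((N : ℝ) / 2) := Real.rpow_pos_of_pos h1ε _
  have hfpos : ∀ w, 0 < f w := fun w =>
    mul_pos (mul_pos (Real.rpow_pos_of_pos (by positivity) _)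
      (Real.rpow_pos_of_pos hC.det_pos _)) (Real.exp_pos _)
  have hfjpos : ∀ j w, 0 < fj j w := fun j w => mul_pos (Real.exp_pos _) (hfpos w)
  have hgpos : ∀ i w, 0 < g i w := fun i w =>
    mul_pos (mul_pos (mul_pos (mul_pos (Real.rpow_pos_of_pos h1ε _)
      (Real.rpow_pos_of_pos (by positivity) _)) (Real.rpow_pos_of_pos hC.det_pos _))
      (Real.exp_pos _)) (Real.exp_pos _)
  have hSpos : ∀ w, 0 < ∑ i, p i * g i w := fun w =>
    Finset.sum_pos (fun i _ => mul_pos (hp i) (hgpos i w)) Finset.univ_nonempty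
  -- the key pointwise bound
  have hfle : ∀ (j : Fin N) (w : Fin N → ℝ), (1 - ε) ^ ((N : ℝ) / 2) * fj j w ≤ g j w := by
    intro j w
    have hc : 0 < C j j := by
      exact hC.diag_pos
    have hQ := aux_cs C hC (w + (1/2:ℝ) • σ) j
    have hvj : (w + (1/2:ℝ) • σ) j = w j + C j j / 2 := by
      simp only [Pi.add_apply, Pi.smul_apply, smul_eq_mul, σ]; ring
    set Q := (w + (1/2:ℝ) • σ) ⬝ᵥ C⁻¹ *ᵥ (w + (1/2:ℝ) • σ) with hQdef
    rw [hvj] at hQ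
    have hwQ : w j ≤ Q / 2 := by nlinarith [sq_nonneg (w j - C j j / 2)]
    have e1 : (1 - ε) ^ ((N : ℝ) / 2) * fj j w =
        (1 - ε) ^ ((N : ℝ) / 2) * ((2 * Real.pi) ^ (-(N : ℝ) / 2) * C.det ^ (-(1 : ℝ) / 2)) *
          Real.exp (w j + -(1/2) * Q) := by
      simp only [fj, f]; rw [Real.exp_add]; ring
    have e2 : g j w =
        (1 - ε) ^ ((N : ℝ) / 2) * ((2 * Real.pi) ^ (-(N : ℝ) / 2) * C.det ^ (-(1 : ℝ) / 2)) *
          Real.exp ((1 - ε) * w j + -((1 - ε)/2) * Q) := by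
      simp only [g]; rw [Real.exp_add]; ring
    rw [e1, e2]
    have hle : w j + -(1/2) * Q ≤ (1 - ε) * w j + -((1 - ε)/2) * Q := by nlinarith
    exact mul_le_mul_of_nonneg_left (Real.exp_le_exp.mpr hle)
      (mul_nonneg hApos.le (mul_nonneg (Real.rpow_nonneg (by positivity) _)
        (Real.rpow_nonneg hC.det_pos.le _)))
  -- ratio equals inf over j, pointwise in w
  have hratio : ∀ w, (∑ i, p i * g i w) / (⨆ j, fj j w) = ⨅ j, (∑ i, p i * g i w) / fj j w := by
    intro w
    obtain ⟨j0, hj0⟩ := Finite.exists_max (fun j => fj j w)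
    have hsup : (⨆ j, fj j w) = fj j0 w :=
      le_antisymm (ciSup_le hj0) (le_ciSup (f := fun j => fj j w) (Finite.bddAbove_range _) j0)
    rw [hsup]
    refine le_antisymm (le_ciInf fun j => ?_) (ciInf_le (Finite.bddBelow_range _) j0)
    gcongr
    · exact (hSpos w).le
    · exact hfjpos j w
    · exact hj0 j
  -- lower bound
  obtain ⟨m, hm⟩ := Finite.exists_min p
  have hbound : ∀ (w : Fin N → ℝ) (j : Fin N),
      p m * (1 - ε) ^ ((N : ℝ) / 2) ≤ (∑ i, p i * g i w) / fj j w := by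
    intro w j
    rw [le_div_iff₀ (hfjpos j w)]
    have h1 := hfle j w
    have h2 : p j * g j w ≤ ∑ i, p i * g i w :=
      Finset.single_le_sum (f := fun i => p i * g i w)
        (fun i _ => (mul_pos (hp i) (hgpos i w)).le) (Finset.mem_univ j)
    have h3 := mul_le_mul_of_nonneg_left h1 (hp j).le
    have h4 := mul_le_mul_of_nonneg_right (hm j)
      (mul_nonneg hApos.le (hfjpos j w).le)
    nlinarith [h3, h4]
  have hlow : ∀ w, p m * (1 - ε) ^ ((N : ℝ) / 2) ≤ (∑ i, p i * g i w) / (⨆ j, fj j w) := by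
    intro w
    rw [hratio w]
    exact le_ciInf (hbound w)
  exact ⟨iInf_congr hratio, lt_of_lt_of_le (mul_pos (hp m) hApos) (le_ciInf hlow)⟩
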